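/- Let $S, f_1, f_2 : [0,R] \to \mathbb{R}$ be continuously differentiable with $f_1(R) = f_2(R) = 0$, and define operators $\hat D_1\phi = S\phi + (f_1\phi)' - f_2\phi'$ and $\hat D_2\phi = S\phi + (f_2\phi)' - f_1\phi'$. Then for all continuously differentiable $\psi, \phi : [0,R] \to \mathbb{R}$ vanishing at the origin, $\int_0^R (\hat D_1\psi)\,\phi\,dr = \int_0^R \psi\,(\hat D_2\phi)\,dr$. -/

import Mathlib

/-- Symmetry relation between the two cross-coupling operators
`D̂₁φ = Sφ + (f₁φ)' - f₂φ'` and `D̂₂φ = Sφ + (f₂φ)' - f₁φ'`: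
`∫₀ᴿ (D̂₁ψ) φ = ∫₀ᴿ ψ (D̂₂φ)` for admissible `ψ, φ`. -/
theorem cross_coupling_operators_symmetric
    (R : ℝ) (hR : 0 ≤ R) (S f₁ f₂ ψ φ : ℝ → ℝ)
    (hS : ContDiff ℝ 1 S) (hf₁ : ContDiff ℝ 1 f₁) (hf₂ : ContDiff ℝ 1 f₂)
    (hψ : ContDiff ℝ 1 ψ) (hφ : ContDiff ℝ 1 φ)
    (hf₁R : f₁ R = 0) (hf₂R : f₂ R = 0) (hψ0 : ψ 0 = 0) (hφ0 : φ 0 = 0) :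
    (∫ r in (0:ℝ)..R,
        (S r * ψ r + deriv (fun x => f₁ x * ψ x) r - f₂ r * deriv ψ r) * φ r)
      = ∫ r in (0:ℝ)..R,
        ψ r * (S r * φ r + deriv (fun x => f₂ x * φ x) r - f₁ r * deriv φ r) := by
  have hf₁d : Differentiable ℝ f₁ := hf₁.differentiable one_ne_zero
  have hf₂d : Differentiable ℝ f₂ := hf₂.differentiable one_ne_zero
  have hψd : Differentiable ℝ ψ := hψ.differentiable one_ne_zero
  have hφd : Differentiable ℝ φ := hφ.differentiable one_ne_zero
  set g : ℝ → ℝ := fun x => (f₁ x - f₂ x) * (ψ x * φ x) with hg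
  have hgd : Differentiable ℝ g := (hf₁d.sub hf₂d).mul (hψd.mul hφd)
  -- pointwise identity: LHS integrand - RHS integrand = deriv g
  have key : ∀ r : ℝ,
      (S r * ψ r + deriv (fun x => f₁ x * ψ x) r - f₂ r * deriv ψ r) * φ r
        - ψ r * (S r * φ r + deriv (fun x => f₂ x * φ x) r - f₁ r * deriv φ r)
      = deriv g r := by
    intro r
    have h1 : deriv (fun x => f₁ x * ψ x) r = deriv f₁ r * ψ r + f₁ r * deriv ψ r :=
      deriv_mul (hf₁d r) (hψd r)
    have h2 : deriv (fun x => f₂ x * φ x) r = deriv f₂ r * φ r + f₂ r * deriv φ r :=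
      deriv_mul (hf₂d r) (hφd r)
    have h3 : deriv g r = (deriv f₁ r - deriv f₂ r) * (ψ r * φ r)
        + (f₁ r - f₂ r) * (deriv ψ r * φ r + ψ r * deriv φ r) := by
      rw [hg]
      rw [deriv_fun_mul (c := fun x => f₁ x - f₂ x) (d := fun x => ψ x * φ x)
          ((hf₁d r).sub (hf₂d r)) ((hψd r).mul (hφd r)),
        deriv_fun_sub (hf₁d r) (hf₂d r), deriv_fun_mul (hψd r) (hφd r)]
    rw [h1, h2, h3]; ring
  -- continuity / integrability facts
  have hcf₁ := hf₁.continuous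
  have hcf₂ := hf₂.continuous
  have hcψ := hψ.continuous
  have hcφ := hφ.continuous
  have hcdψ : Continuous (deriv ψ) := hψ.continuous_deriv le_rfl
  have hcdφ : Continuous (deriv φ) := hφ.continuous_deriv le_rfl
  have hcd₁ : Continuous (deriv (fun x => f₁ x * ψ x)) :=
    (hf₁.mul hψ).continuous_deriv le_rfl
  have hcd₂ : Continuous (deriv (fun x => f₂ x * φ x)) :=
    (hf₂.mul hφ).continuous_deriv le_rfl
  have hL : Continuous (fun r =>
      (S r * ψ r + deriv (fun x => f₁ x * ψ x) r - f₂ r * deriv ψ r) * φ r) := by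
    exact (((hS.continuous.mul hcψ).add hcd₁).sub (hcf₂.mul hcdψ)).mul hcφ
  have hRc : Continuous (fun r =>
      ψ r * (S r * φ r + deriv (fun x => f₂ x * φ x) r - f₁ r * deriv φ r)) := by
    exact hcψ.mul (((hS.continuous.mul hcφ).add hcd₂).sub (hcf₁.mul hcdφ))
  have hLi : IntervalIntegrable _ MeasureTheory.volume 0 R := hL.intervalIntegrable 0 R
  have hRi : IntervalIntegrable _ MeasureTheory.volume 0 R := hRc.intervalIntegrable 0 R
  have hgint : (∫ r in (0:ℝ)..R, deriv g r) = g R - g 0 := by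
    apply intervalIntegral.integral_deriv_eq_sub (fun x _ => hgd x)
    exact (((hf₁.sub hf₂).mul (hψ.mul hφ)).continuous_deriv le_rfl).intervalIntegrable 0 R
  have hg0 : g 0 = 0 := by simp [hg, hψ0]
  have hgR : g R = 0 := by simp [hg, hf₁R, hf₂R]
  have hsub := intervalIntegral.integral_sub hLi hRi
  have : (∫ r in (0:ℝ)..R,
      ((S r * ψ r + deriv (fun x => f₁ x * ψ x) r - f₂ r * deriv ψ r) * φ r
        - ψ r * (S r * φ r + deriv (fun x => f₂ x * φ x) r - f₁ r * deriv φ r))) = 0 := by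
    rw [intervalIntegral.integral_congr (g := deriv g) (fun x _ => key x), hgint, hg0, hgR]
    ring
  rw [hsub] at this
  linarith
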